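/- Fix a real l > 0 and real g with g + l > 1/2. For x > 0, define ψp(x) = ₁F₁(-l; g + l + 1/2; -x²) and ψm(x) = ₁F₁(-l; g + l - 1/2; -x²). Then ψp satisfies ψp'' = 4l·ψp - 2((g+l)/x + x)·ψp' for all x > 0, and moreover 8l·ψp·ψm + (2(1-2g-2l)/x)·ψp·ψm' - 4x·ψm·ψp' - 2·ψm'·ψp' = 0 on (0,∞). -/

import Mathlib

open Filter Topology

namespace HypAux

noncomputable def pox (x : ℝ) (k : ℕ) : ℝ := (ascPochhammer ℝ k).eval x

lemma pox_succ (x : ℝ) (k : ℕ) : pox x (k + 1) = pox x k * (x + k) := by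
  simp [pox, ascPochhammer_succ_right]

lemma pox_succ' (x : ℝ) (k : ℕ) : pox x (k + 1) = x * pox (x + 1) k := by
  simp [pox, ascPochhammer_succ_left, Polynomial.eval_comp]

lemma pox_pos {x : ℝ} (hx : 0 < x) (k : ℕ) : 0 < pox x k := ascPochhammer_pos k x hx

noncomputable def coef (a b : ℝ) (k : ℕ) : ℝ := pox a k / pox b k / (Nat.factorial k)

noncomputable def D (c : ℕ → ℝ) (k : ℕ) : ℝ := ((k : ℝ) + 1) * c (k + 1)

noncomputable def S (c : ℕ → ℝ) (z : ℝ) : ℝ := ∑' k, c k * z ^ k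

def Good (c : ℕ → ℝ) : Prop := ∀ r : ℝ, 1 ≤ r → Summable (fun k => |c k| * r ^ k)

lemma coef_succ {b : ℝ} (a : ℝ) (hb : 0 < b) (k : ℕ) :
    coef a b (k + 1) * ((b + k) * ((k : ℝ) + 1)) = coef a b k * (a + k) := by
  have hbk := (pox_pos hb k).ne'
  have hbk1 : b + (k : ℝ) ≠ 0 := by positivity
  have hf : ((Nat.factorial k : ℝ)) ≠ 0 := by exact_mod_cast (Nat.factorial_ne_zero k)
  unfold coef
  rw [pox_succ, pox_succ, Nat.factorial_succ, Nat.cast_mul, Nat.cast_add, Nat.cast_one]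
  field_simp

lemma good_coef (a : ℝ) {b : ℝ} (hb : 0 < b) : Good (coef a b) := by
  intro r hr
  have hr0 : (0:ℝ) < r := by linarith
  by_cases hnz : ∀ k, pox a k ≠ 0
  · have hpos : ∀ k, 0 < |coef a b k| * r ^ k := by
      intro k
      have : coef a b k ≠ 0 := by
        unfold coef
        have hf : ((Nat.factorial k : ℝ)) ≠ 0 := by exact_mod_cast (Nat.factorial_ne_zero k)
        exact div_ne_zero (div_ne_zero (hnz k) (pox_pos hb k).ne') hf
      positivity
    refine summable_of_ratio_test_tendsto_lt_one (l := 0) one_pos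
      (Eventually.of_forall fun k => (hpos k).ne') ?_
    have hratio : ∀ k : ℕ, ‖|coef a b (k+1)| * r ^ (k+1)‖ / ‖|coef a b k| * r ^ k‖
        = |a + k| * r / ((b + k) * ((k:ℝ) + 1)) := by
      intro k
      have hbk : (0:ℝ) < (b + k) * ((k:ℝ) + 1) := by positivity
      have h1 : |coef a b (k+1)| * ((b + k) * ((k:ℝ) + 1)) = |coef a b k| * |a + k| := by
        have := coef_succ a hb k
        calc |coef a b (k+1)| * ((b + k) * ((k:ℝ) + 1))
            = |coef a b (k+1) * ((b + k) * ((k:ℝ) + 1))| := by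
              rw [abs_mul, abs_of_pos hbk]
          _ = |coef a b k * (a + k)| := by rw [this]
          _ = |coef a b k| * |a + k| := abs_mul _ _
      rw [Real.norm_eq_abs, Real.norm_eq_abs, abs_of_pos (hpos (k+1)), abs_of_pos (hpos k)]
      rw [div_eq_div_iff (hpos k).ne' hbk.ne']
      calc |coef a b (k+1)| * r ^ (k+1) * ((b + k) * ((k:ℝ) + 1))
          = (|coef a b (k+1)| * ((b + k) * ((k:ℝ) + 1))) * r ^ (k+1) := by ring
        _ = (|coef a b k| * |a + k|) * r ^ (k+1) := by rw [h1]
        _ = |a + k| * r * (|coef a b k| * r ^ k) := by rw [pow_succ]; ring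
    simp only [hratio]
    have hbound : ∀ᶠ k : ℕ in atTop, |a + k| * r / ((b + k) * ((k:ℝ) + 1)) ≤ 2 * r / k := by
      filter_upwards [eventually_ge_atTop (max 1 ⌈|a|⌉₊)] with k hk
      have hk1 : (1:ℕ) ≤ k := le_trans (le_max_left _ _) hk
      have hk1' : (1:ℝ) ≤ (k:ℝ) := by exact_mod_cast hk1
      have hka : |a| ≤ (k:ℝ) := by
        calc |a| ≤ ⌈|a|⌉₊ := Nat.le_ceil _
          _ ≤ (k:ℝ) := by exact_mod_cast le_trans (le_max_right _ _) hk
      have hnum : |a + k| ≤ 2 * k := by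
        calc |a + k| ≤ |a| + |(k:ℝ)| := abs_add_le a k
          _ ≤ (k:ℝ) + (k:ℝ) := by
              rw [abs_of_nonneg (by positivity : (0:ℝ) ≤ (k:ℝ))]
              linarith
          _ = 2 * k := by ring
      have hkpos : (0:ℝ) < (k:ℝ) := by linarith
      rw [div_le_div_iff₀ (by positivity) hkpos]
      calc |a + k| * r * k ≤ (2 * k) * r * k := by gcongr
        _ = 2 * r * ((k:ℝ) * k) := by ring
        _ ≤ 2 * r * ((b + k) * ((k:ℝ) + 1)) := by
            have h9 : (k:ℝ) * k ≤ (b + k) * ((k:ℝ) + 1) := by nlinarith [mul_pos hb hkpos]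
            exact mul_le_mul_of_nonneg_left h9 (by positivity)
    have hlim : Tendsto (fun k : ℕ => 2 * r / (k:ℝ)) atTop (nhds 0) :=
      tendsto_const_div_atTop_nhds_zero_nat (2 * r)
    refine squeeze_zero' ?_ hbound hlim
    filter_upwards with k
    positivity
  · push_neg at hnz
    obtain ⟨k0, hk0⟩ := hnz
    have hzero : ∀ k, k0 ≤ k → pox a k = 0 := by
      intro k hk
      induction k with
      | zero => simpa [Nat.le_zero.mp hk] using hk0
      | succ n ih =>
        rcases Nat.lt_or_ge k0 (n+1) with h | h
        · rw [pox_succ, ih (Nat.lt_succ_iff.mp h), zero_mul]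
        · have : k0 = n + 1 := le_antisymm hk h
          rw [← this]; exact hk0
    refine summable_of_ne_finset_zero (s := Finset.range k0) fun k hk => ?_
    have hle : k0 ≤ k := Nat.le_of_not_lt (by simpa using hk)
    simp [coef, hzero k hle]

lemma Good.summable {c : ℕ → ℝ} (h : Good c) (z : ℝ) :
    Summable (fun k => c k * z ^ k) := by
  refine Summable.of_norm_bounded (h (|z| + 1) (by linarith [abs_nonneg z])) fun k => ?_
  have h0 : (0:ℝ) ≤ |z| := abs_nonneg z
  calc ‖c k * z ^ k‖ = |c k| * |z| ^ k := by rw [Real.norm_eq_abs, abs_mul, abs_pow]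
    _ ≤ |c k| * (|z| + 1) ^ k := by gcongr; linarith

lemma Good.summable_k {c : ℕ → ℝ} (h : Good c) (z : ℝ) :
    Summable (fun k : ℕ => (k : ℝ) * c k * z ^ k) := by
  refine Summable.of_norm_bounded (h (2 * (|z| + 1)) (by linarith [abs_nonneg z])) fun k => ?_
  have h0 : (0:ℝ) ≤ |z| := abs_nonneg z
  have h1 : (k : ℝ) ≤ 2 ^ k := by exact_mod_cast (Nat.lt_two_pow_self (n := k)).le
  calc ‖(k : ℝ) * c k * z ^ k‖ = (k : ℝ) * |c k| * |z| ^ k := by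
        rw [Real.norm_eq_abs, abs_mul, abs_mul, abs_pow, Nat.abs_cast]
    _ ≤ 2 ^ k * |c k| * (|z| + 1) ^ k := by
        gcongr
        linarith
    _ = |c k| * (2 * (|z| + 1)) ^ k := by rw [mul_pow]; ring

set_option maxHeartbeats 1000000 in
lemma Good.shift {c : ℕ → ℝ} (h : Good c) : Good (D c) := by
  intro r hr
  have hr0 : (0:ℝ) < r := by linarith
  have h2 : Summable (fun k => |c (k + 1)| * (2 * r) ^ (k + 1)) :=
    (summable_nat_add_iff 1).mpr (h (2 * r) (by linarith))
  refine Summable.of_nonneg_of_le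
    (fun k => mul_nonneg (abs_nonneg _) (pow_nonneg hr0.le k)) (fun k => ?_)
    (h2.mul_left (1 / r))
  have hk : ((k : ℝ) + 1) ≤ 2 ^ (k + 1) := by
    exact_mod_cast (Nat.lt_two_pow_self (n := k + 1)).le
  have habs : |D c k| = ((k : ℝ) + 1) * |c (k + 1)| := by
    rw [show D c k = ((k : ℝ) + 1) * c (k + 1) from rfl, abs_mul,
      abs_of_nonneg (show (0:ℝ) ≤ (k:ℝ)+1 by positivity)]
  calc |D c k| * r ^ k = ((k : ℝ) + 1) * |c (k + 1)| * r ^ k := by rw [habs]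
    _ ≤ 2 ^ (k + 1) * |c (k + 1)| * r ^ k := by gcongr
    _ = 1 / r * (|c (k + 1)| * (2 * r) ^ (k + 1)) := by
        rw [mul_pow]
        field_simp
        ring

/-- `z·S(Dc)(z) = ∑ k cₖ zᵏ` -/
lemma z_mul_S_D {c : ℕ → ℝ} (h : Good c) (z : ℝ) :
    z * S (D c) z = ∑' k : ℕ, (k : ℝ) * c k * z ^ k := by
  have hs : Summable (fun k : ℕ => (k : ℝ) * c k * z ^ k) := h.summable_k z
  rw [S, ← tsum_mul_left, Summable.tsum_eq_zero_add hs]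
  simp only [Nat.cast_zero, zero_mul, zero_add]
  refine tsum_congr fun k => ?_
  rw [show D c k = ((k:ℝ)+1) * c (k+1) from rfl]
  push_cast
  ring

lemma hasDerivAt_S {c : ℕ → ℝ} (h : Good c) (hD : Good (D c)) (z : ℝ) :
    HasDerivAt (fun y => S c y) (S (D c) z) z := by
  set R : ℝ := |z| + 1 with hR
  have hR1 : (1:ℝ) ≤ R := by rw [hR]; linarith [abs_nonneg z]
  have hR0 : (0:ℝ) < R := by linarith
  have hzR : z ∈ Metric.ball (0:ℝ) R := by
    simp [Metric.mem_ball, Real.dist_eq, hR]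
  set u : ℕ → ℝ := fun k => |c k| * ((k:ℝ) * R ^ (k - 1)) with hu
  have hu_sum : Summable u := by
    rw [← summable_nat_add_iff 1]
    have : (fun n : ℕ => u (n + 1)) = fun n : ℕ => |D c n| * R ^ n := by
      funext n
      simp only [hu, HypAux.D, abs_mul, Nat.add_sub_cancel]
      rw [abs_of_nonneg (show (0:ℝ) ≤ (n:ℝ)+1 by positivity)]
      push_cast
      ring
    rw [this]
    exact hD R hR1
  have hderiv : ∀ (k : ℕ) (y : ℝ), y ∈ Metric.ball (0:ℝ) R →
      HasDerivAt (fun w => c k * w ^ k) (c k * ((k:ℝ) * y ^ (k - 1))) y :=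
    fun k y _ => (hasDerivAt_pow k y).const_mul (c k)
  have hbound : ∀ (k : ℕ) (y : ℝ), y ∈ Metric.ball (0:ℝ) R →
      ‖c k * ((k:ℝ) * y ^ (k - 1))‖ ≤ u k := by
    intro k y hy
    have hyR : |y| ≤ R := by
      rw [Metric.mem_ball, Real.dist_eq, sub_zero] at hy
      exact hy.le
    have hy0 : (0:ℝ) ≤ |y| := abs_nonneg y
    calc ‖c k * ((k:ℝ) * y ^ (k - 1))‖ = |c k| * ((k:ℝ) * |y| ^ (k - 1)) := by
          rw [Real.norm_eq_abs, abs_mul, abs_mul, abs_pow, Nat.abs_cast]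
      _ ≤ |c k| * ((k:ℝ) * R ^ (k - 1)) := by gcongr
  have key := hasDerivAt_tsum_of_isPreconnected hu_sum Metric.isOpen_ball
    (convex_ball (0:ℝ) R).isPreconnected hderiv hbound hzR (h.summable z) hzR
  have hval : (∑' k : ℕ, c k * ((k:ℝ) * z ^ (k - 1))) = S (D c) z := by
    have hsum : Summable (fun k : ℕ => c k * ((k:ℝ) * z ^ (k - 1))) :=
      Summable.of_norm_bounded hu_sum fun k => hbound k z hzR
    rw [Summable.tsum_eq_zero_add hsum]
    simp only [Nat.cast_zero, zero_mul, mul_zero, zero_add]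
    rw [S]
    refine tsum_congr fun k => ?_
    rw [show D c k = ((k:ℝ)+1) * c (k+1) from rfl]
    simp only [Nat.add_sub_cancel]
    push_cast
    ring
  rw [← hval]
  exact key

/-- Kummer's equation, as an identity of sums: `z u'' + (β - z) u' - a u = 0`. -/
lemma kummer (a : ℝ) {β : ℝ} (hβ : 0 < β) (z : ℝ) :
    z * S (D (D (coef a β))) z + (β - z) * S (D (coef a β)) z - a * S (coef a β) z = 0 := by
  set c := coef a β with hc
  have h : Good c := good_coef a hβ
  have hd : Good (D c) := h.shift
  have e1 : z * S (D (D c)) z = ∑' k : ℕ, (k : ℝ) * D c k * z ^ k := z_mul_S_D hd z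
  have e2 : z * S (D c) z = ∑' k : ℕ, (k : ℝ) * c k * z ^ k := z_mul_S_D h z
  have key : ∀ k : ℕ, (k : ℝ) * D c k * z ^ k + β * (D c k * z ^ k)
      = (k : ℝ) * c k * z ^ k + a * (c k * z ^ k) := by
    intro k
    have hrec := coef_succ a hβ k
    rw [show D c k = ((k:ℝ)+1) * c (k+1) from rfl]
    rw [← hc] at hrec
    linear_combination z ^ k * hrec
  have eq : (∑' k : ℕ, (k : ℝ) * D c k * z ^ k) + β * ∑' k : ℕ, D c k * z ^ k
      = (∑' k : ℕ, (k : ℝ) * c k * z ^ k) + a * ∑' k : ℕ, c k * z ^ k := by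
    rw [← tsum_mul_left, ← tsum_mul_left,
      ← Summable.tsum_add (hd.summable_k z) ((hd.summable z).mul_left β),
      ← Summable.tsum_add (h.summable_k z) ((h.summable z).mul_left a)]
    exact tsum_congr key
  have hS1 : S (D c) z = ∑' k : ℕ, D c k * z ^ k := rfl
  have hS2 : S c z = ∑' k : ℕ, c k * z ^ k := rfl
  linear_combination e1 - e2 + eq + β * hS1 - a * hS2

/-- Contiguous relation (A): `b·F(a;b) = b·F(a;b+1) + z·F'(a;b+1)`. -/
lemma contigA (a : ℝ) {b : ℝ} (hb : 0 < b) (z : ℝ) :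
    b * S (coef a b) z = b * S (coef a (b+1)) z + z * S (D (coef a (b+1))) z := by
  have hb1 : (0:ℝ) < b + 1 := by linarith
  have hm : Good (coef a b) := good_coef a hb
  have hp : Good (coef a (b+1)) := good_coef a hb1
  have key : ∀ k : ℕ, b * (coef a b k * z ^ k)
      = b * (coef a (b+1) k * z ^ k) + (k : ℝ) * coef a (b+1) k * z ^ k := by
    intro k
    have hrel : b * pox (b+1) k = pox b k * (b + k) :=
      ((pox_succ' b k).symm.trans (pox_succ b k))
    have hP := (pox_pos hb k).ne'
    have hQne := (pox_pos hb1 k).ne'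
    have hbk1 : b + (k : ℝ) ≠ 0 := by positivity
    have hf : ((Nat.factorial k : ℝ)) ≠ 0 := by exact_mod_cast (Nat.factorial_ne_zero k)
    have hQval : pox (b+1) k = pox b k * (b + k) / b := by
      rw [eq_div_iff hb.ne']
      linear_combination hrel
    unfold coef
    rw [hQval]
    field_simp
  have e2 : z * S (D (coef a (b+1))) z = ∑' k : ℕ, (k : ℝ) * coef a (b+1) k * z ^ k :=
    z_mul_S_D hp z
  have eq : (∑' k : ℕ, b * (coef a b k * z ^ k))
      = ∑' k : ℕ, (b * (coef a (b+1) k * z ^ k) + (k : ℝ) * coef a (b+1) k * z ^ k) :=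
    tsum_congr key
  rw [Summable.tsum_add ((hp.summable z).mul_left b) (hp.summable_k z)] at eq
  calc b * S (coef a b) z = ∑' k : ℕ, b * (coef a b k * z ^ k) := tsum_mul_left.symm
    _ = (∑' k : ℕ, b * (coef a (b+1) k * z ^ k))
        + ∑' k : ℕ, (k : ℝ) * coef a (b+1) k * z ^ k := eq
    _ = b * S (coef a (b+1)) z + z * S (D (coef a (b+1))) z := by
        rw [← e2, tsum_mul_left]
        rfl

/-- Contiguous relation (B): `b·F'(a;b) = a·F(a;b+1) + z·F'(a;b+1)`. -/
lemma contigB (a : ℝ) {b : ℝ} (hb : 0 < b) (z : ℝ) :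
    b * S (D (coef a b)) z = a * S (coef a (b+1)) z + z * S (D (coef a (b+1))) z := by
  have hb1 : (0:ℝ) < b + 1 := by linarith
  have hm : Good (coef a b) := good_coef a hb
  have hp : Good (coef a (b+1)) := good_coef a hb1
  have key : ∀ k : ℕ, b * (D (coef a b) k * z ^ k)
      = a * (coef a (b+1) k * z ^ k) + (k : ℝ) * coef a (b+1) k * z ^ k := by
    intro k
    have hQne := (pox_pos hb1 k).ne'
    have hf : ((Nat.factorial k : ℝ)) ≠ 0 := by exact_mod_cast (Nat.factorial_ne_zero k)
    have hk1 : ((k:ℝ) + 1) ≠ 0 := by positivity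
    rw [show D (coef a b) k = ((k:ℝ)+1) * coef a b (k+1) from rfl]
    unfold coef
    rw [pox_succ a k, pox_succ' b k, Nat.factorial_succ, Nat.cast_mul, Nat.cast_add,
      Nat.cast_one]
    field_simp
  have e2 : z * S (D (coef a (b+1))) z = ∑' k : ℕ, (k : ℝ) * coef a (b+1) k * z ^ k :=
    z_mul_S_D hp z
  have eq : (∑' k : ℕ, b * (D (coef a b) k * z ^ k))
      = ∑' k : ℕ, (a * (coef a (b+1) k * z ^ k) + (k : ℝ) * coef a (b+1) k * z ^ k) :=
    tsum_congr key
  rw [Summable.tsum_add ((hp.summable z).mul_left a) (hp.summable_k z)] at eq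
  calc b * S (D (coef a b)) z = ∑' k : ℕ, b * (D (coef a b) k * z ^ k) := tsum_mul_left.symm
    _ = (∑' k : ℕ, a * (coef a (b+1) k * z ^ k))
        + ∑' k : ℕ, (k : ℝ) * coef a (b+1) k * z ^ k := eq
    _ = a * S (coef a (b+1)) z + z * S (D (coef a (b+1))) z := by
        rw [← e2, tsum_mul_left]
        rfl

end HypAux

/-- The confluent hypergeometric (Kummer) function
`₁F₁(a; b; z) = ∑_{k≥0} (a)_k/(b)_k z^k/k!`. -/
noncomputable def hyp1F1 (a b z : ℝ) : ℝ :=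
  ∑' k : ℕ,
    (ascPochhammer ℝ k).eval a / (ascPochhammer ℝ k).eval b * z ^ k / (Nat.factorial k)

namespace HypAux

lemma hyp1F1_eq_S (a b z : ℝ) : hyp1F1 a b z = S (coef a b) z :=
  tsum_congr fun k => by rw [coef, pox, pox]; ring

end HypAux

open HypAux in
/-- For the continuous-`l` extension of the radial oscillator, with
`ψp(x) = ₁F₁(-l; g+l+1/2; -x²)` and `ψm(x) = ₁F₁(-l; g+l-1/2; -x²)`:
the ODE `ψp'' = 4l ψp - 2((g+l)/x + x) ψp'` and the compatibility
identity (cc12RO) hold on `(0, ∞)`. -/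
theorem hyp1F1_radial_oscillator (l g : ℝ) (hl : 0 < l) (hgl : 1/2 < g + l)
    (ψp ψm : ℝ → ℝ)
    (hψp : ∀ x, ψp x = hyp1F1 (-l) (g + l + 1/2) (-x ^ 2))
    (hψm : ∀ x, ψm x = hyp1F1 (-l) (g + l - 1/2) (-x ^ 2)) :
    (∀ x : ℝ, 0 < x →
      deriv (deriv ψp) x = 4 * l * ψp x - 2 * ((g + l) / x + x) * deriv ψp x) ∧
    (∀ x : ℝ, 0 < x →
      8 * l * ψp x * ψm x + (2 * (1 - 2 * g - 2 * l) / x) * ψp x * deriv ψm x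
        - 4 * x * ψm x * deriv ψp x - 2 * deriv ψm x * deriv ψp x = 0) := by
  set a : ℝ := -l with ha
  set b : ℝ := g + l - 1/2 with hbdef
  have hb : 0 < b := by rw [hbdef]; linarith
  have hb1 : 0 < b + 1 := by linarith
  have hbp : g + l + 1/2 = b + 1 := by rw [hbdef]; ring
  set cp : ℕ → ℝ := coef a (b + 1) with hcp
  set cm : ℕ → ℝ := coef a b with hcm
  have hgp : Good cp := good_coef a hb1
  have hgp1 : Good (D cp) := hgp.shift
  have hgp2 : Good (D (D cp)) := hgp1.shift
  have hgm : Good cm := good_coef a hb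
  have hgm1 : Good (D cm) := hgm.shift
  -- rewrite the functions
  have hψp' : ψp = fun x => S cp (-x ^ 2) := by
    funext x
    rw [hψp x, hbp, hyp1F1_eq_S]
  have hψm' : ψm = fun x => S cm (-x ^ 2) := by
    funext x
    rw [hψm x, hyp1F1_eq_S]
  -- inner derivative
  have hinner : ∀ x : ℝ, HasDerivAt (fun y : ℝ => -y ^ 2) (-(2 * x)) x := by
    intro x
    simpa using (hasDerivAt_pow 2 x).fun_neg
  -- first derivatives
  have hDp : ∀ x : ℝ, HasDerivAt ψp (S (D cp) (-x ^ 2) * (-(2 * x))) x := by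
    intro x
    rw [hψp']
    exact (hasDerivAt_S hgp hgp1 (-x ^ 2)).comp x (hinner x)
  have hDm : ∀ x : ℝ, HasDerivAt ψm (S (D cm) (-x ^ 2) * (-(2 * x))) x := by
    intro x
    rw [hψm']
    exact (hasDerivAt_S hgm hgm1 (-x ^ 2)).comp x (hinner x)
  have hdp : deriv ψp = fun x => S (D cp) (-x ^ 2) * (-(2 * x)) :=
    funext fun x => (hDp x).deriv
  have hdm : deriv ψm = fun x => S (D cm) (-x ^ 2) * (-(2 * x)) :=
    funext fun x => (hDm x).deriv
  -- second derivative of ψp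
  have hDDp : ∀ x : ℝ, HasDerivAt (fun x => S (D cp) (-x ^ 2) * (-(2 * x)))
      ((S (D (D cp)) (-x ^ 2) * (-(2 * x))) * (-(2 * x)) + S (D cp) (-x ^ 2) * (-2)) x := by
    intro x
    have h1 : HasDerivAt (fun x : ℝ => S (D cp) (-x ^ 2)) (S (D (D cp)) (-x ^ 2) * (-(2 * x))) x :=
      by exact (hasDerivAt_S hgp1 hgp2 (-x ^ 2)).comp x (hinner x)
    have h2 : HasDerivAt (fun x : ℝ => -(2 * x)) (-2) x := by
      simpa using ((hasDerivAt_id x).const_mul (2:ℝ)).fun_neg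
    simpa using h1.fun_mul h2
  constructor
  · intro x hx
    have hx0 : x ≠ 0 := hx.ne'
    have hd2 : deriv (deriv ψp) x
        = (S (D (D cp)) (-x ^ 2) * (-(2 * x))) * (-(2 * x)) + S (D cp) (-x ^ 2) * (-2) := by
      rw [hdp]
      exact (hDDp x).deriv
    have hval1 : ψp x = S cp (-x ^ 2) := by rw [hψp x, hbp, hyp1F1_eq_S]
    have hval2 : deriv ψp x = S (D cp) (-x ^ 2) * (-(2 * x)) := (hDp x).deriv
    have hk := kummer a hb1 (-x ^ 2)
    rw [← hcp] at hk
    rw [ha, hbdef] at hk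
    have hred : 2 * ((g + l) / x + x) * (S (D cp) (-x ^ 2) * -(2 * x))
        = -(4 * ((g + l) + x ^ 2) * S (D cp) (-x ^ 2)) := by
      field_simp
      ring
    rw [hd2, hval1, hval2, hred]
    linear_combination (-4) * hk
  · intro x hx
    have hx0 : x ≠ 0 := hx.ne'
    have hval1 : ψp x = S cp (-x ^ 2) := by rw [hψp x, hbp, hyp1F1_eq_S]
    have hval2 : deriv ψp x = S (D cp) (-x ^ 2) * (-(2 * x)) := (hDp x).deriv
    have hval3 : ψm x = S cm (-x ^ 2) := by rw [hψm x, hyp1F1_eq_S]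
    have hval4 : deriv ψm x = S (D cm) (-x ^ 2) * (-(2 * x)) := (hDm x).deriv
    have hA := contigA a hb (-x ^ 2)
    have hB := contigB a hb (-x ^ 2)
    rw [← hcp, ← hcm] at hA hB
    rw [hbdef] at hA
    rw [ha, hbdef] at hB
    have hbne : g + l - 1/2 ≠ 0 := ne_of_gt (by linarith)
    have hred2 : 2 * (1 - 2 * g - 2 * l) / x * S cp (-x ^ 2) * (S (D cm) (-x ^ 2) * -(2 * x))
        = -(4 * (1 - 2 * g - 2 * l) * S cp (-x ^ 2) * S (D cm) (-x ^ 2)) := by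
      field_simp
      ring
    rw [hval1, hval2, hval3, hval4, hred2]
    have hE : (g + l - 1/2) * (8 * l * S cp (-x ^ 2) * S cm (-x ^ 2)
        + -(4 * (1 - 2 * g - 2 * l) * S cp (-x ^ 2) * S (D cm) (-x ^ 2))
        - 4 * x * S cm (-x ^ 2) * (S (D cp) (-x ^ 2) * -(2 * x))
        - 2 * (S (D cm) (-x ^ 2) * -(2 * x)) * (S (D cp) (-x ^ 2) * -(2 * x))) = 0 := by
      linear_combination (8 * (l * S cp (-x ^ 2) + x ^ 2 * S (D cp) (-x ^ 2))) * hA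
        + (8 * ((g + l - 1/2) * S cp (-x ^ 2) + -x ^ 2 * S (D cp) (-x ^ 2))) * hB
    have hE2 := (mul_eq_zero.mp hE).resolve_left hbne
    linear_combination hE2
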